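/- Let Λ := {v_II + t·v_I : t ∈ ℝ} be the straight line in ℝ⁵ through v_II with direction v_I. Then Λ ∩ 𝓛 = {v_II + t·v_I : 0 ≤ t < 1/(3+2√3)}; in particular, near the point v_II the intersection of Λ with 𝓛 is a half-open segment emanating from v_II (a single half-branch). -/

import Mathlib

noncomputable def vI : EuclideanSpace ℝ (Fin 5) :=
  !₂[2, -(3 + 2 * Real.sqrt 3), -(3 + 2 * Real.sqrt 3), 5, 5]

noncomputable def vII : EuclideanSpace ℝ (Fin 5) :=
  !₂[2 * (Real.sqrt 3 - 1), 1, 1, 1, 1]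

noncomputable def vIII : EuclideanSpace ℝ (Fin 5) :=
  !₂[2, 5, 5, -(3 + 2 * Real.sqrt 3), -(3 + 2 * Real.sqrt 3)]

def LsetI : Set (EuclideanSpace ℝ (Fin 5)) :=
  {p | ∃ α β : ℝ, β > (3 + 2 * Real.sqrt 3) * α ∧ (3 + 2 * Real.sqrt 3) * α > 0 ∧
    p = α • vI + β • vII}

def LsetII : Set (EuclideanSpace ℝ (Fin 5)) :=
  {p | ∃ γ : ℝ, γ > 0 ∧ p = γ • vII}

def LsetIII : Set (EuclideanSpace ℝ (Fin 5)) :=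
  {p | ∃ δ ε : ℝ, ε > (3 + 2 * Real.sqrt 3) * δ ∧ (3 + 2 * Real.sqrt 3) * δ > 0 ∧
    p = δ • vIII + ε • vII}

def Lset : Set (EuclideanSpace ℝ (Fin 5)) := LsetI ∪ LsetII ∪ LsetIII

def Lambda : Set (EuclideanSpace ℝ (Fin 5)) :=
  {p | ∃ t : ℝ, p = vII + t • vI}

theorem Lambda_inter_Lset :
    Lambda ∩ Lset =
      {p | ∃ t : ℝ, 0 ≤ t ∧ t < 1 / (3 + 2 * Real.sqrt 3) ∧ p = vII + t • vI} := by
  have hr2 : Real.sqrt 3 * Real.sqrt 3 = 3 := Real.mul_self_sqrt (by norm_num)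
  have hr0 : (0:ℝ) ≤ Real.sqrt 3 := Real.sqrt_nonneg 3
  have hr1 : (1:ℝ) < Real.sqrt 3 := by nlinarith
  have hspos : (0:ℝ) < 3 + 2 * Real.sqrt 3 := by linarith
  set r := Real.sqrt 3 with hrdef
  ext p
  constructor
  · rintro ⟨⟨t, ht⟩, hp⟩
    rcases hp with (⟨α, β, h1, h2, hpe⟩ | ⟨γ, hγ, hpe⟩) | ⟨δ, ε, h1, h2, hpe⟩
    · -- LsetI
      have e : vII + t • vI = α • vI + β • vII := ht.symm.trans hpe
      have e1 : 1 + t * (-(3 + 2 * r)) = α * (-(3 + 2 * r)) + β * 1 := by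
        have := congrArg (fun v => v (1 : Fin 5)) e
        simpa [vI, vII, Matrix.cons_val_zero, Matrix.cons_val_one, Matrix.head_cons] using this
      have e3 : 1 + t * 5 = α * 5 + β * 1 := by
        have := congrArg (fun v => v (3 : Fin 5)) e
        simpa [vI, vII, Matrix.cons_val_zero, Matrix.cons_val_one, Matrix.head_cons,
          Matrix.cons_val_two, Matrix.cons_val_three, Matrix.vecHead, Matrix.vecTail] using this
      have hαt : α = t := by
        have h8 : (8 + 2 * r) * (α - t) = 0 := by linear_combination e1 - e3
        rcases mul_eq_zero.mp h8 with h | h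
        · linarith
        · linarith
      refine ⟨t, ?_, ?_, ht⟩
      · nlinarith [h2, hαt]
      · rw [lt_div_iff₀ hspos]; nlinarith [h1, h2, hαt]
    · -- LsetII
      have e : vII + t • vI = γ • vII := ht.symm.trans hpe
      have e1 : 1 + t * (-(3 + 2 * r)) = γ * 1 := by
        have := congrArg (fun v => v (1 : Fin 5)) e
        simpa [vI, vII, Matrix.cons_val_zero, Matrix.cons_val_one, Matrix.head_cons] using this
      have e3 : 1 + t * 5 = γ * 1 := by
        have := congrArg (fun v => v (3 : Fin 5)) e
        simpa [vI, vII, Matrix.cons_val_zero, Matrix.cons_val_one, Matrix.head_cons,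
          Matrix.cons_val_two, Matrix.cons_val_three, Matrix.vecHead, Matrix.vecTail] using this
      have ht0 : t = 0 := by
        have h8 : (8 + 2 * r) * t = 0 := by linear_combination e3 - e1
        rcases mul_eq_zero.mp h8 with h | h
        · linarith
        · exact h
      exact ⟨t, le_of_eq ht0.symm, by rw [ht0]; positivity, ht⟩
    · -- LsetIII : impossible
      exfalso
      have e : vII + t • vI = δ • vIII + ε • vII := ht.symm.trans hpe
      have e0 : 2 * (r - 1) + t * 2 = δ * 2 + ε * (2 * (r - 1)) := by
        have := congrArg (fun v => v (0 : Fin 5)) e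
        simpa [vI, vII, vIII, Matrix.cons_val_zero] using this
      have e1 : 1 + t * (-(3 + 2 * r)) = δ * 5 + ε * 1 := by
        have := congrArg (fun v => v (1 : Fin 5)) e
        simpa [vI, vII, vIII, Matrix.cons_val_zero, Matrix.cons_val_one, Matrix.head_cons] using this
      have e3 : 1 + t * 5 = δ * (-(3 + 2 * r)) + ε * 1 := by
        have := congrArg (fun v => v (3 : Fin 5)) e
        simpa [vI, vII, vIII, Matrix.cons_val_zero, Matrix.cons_val_one, Matrix.head_cons,
          Matrix.cons_val_two, Matrix.cons_val_three, Matrix.vecHead, Matrix.vecTail] using this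
      have hδ : δ = -t := by
        have h8 : (8 + 2 * r) * (δ + t) = 0 := by linear_combination e3 - e1
        rcases mul_eq_zero.mp h8 with h | h
        · linarith
        · linarith
      have hε : ε = 1 - (2 * r - 2) * t := by
        linear_combination (3 + 2 * r) * hδ - e3
      have ht0 : (20 - 8 * r) * t = 0 := by
        linear_combination e0 + 2 * hδ + 2 * (r - 1) * hε - 4 * t * hr2
      have hrlt : r < 5 / 2 := by nlinarith
      rcases mul_eq_zero.mp ht0 with h | h
      · linarith
      · -- t = 0 so δ = 0, contradicting (3+2r)δ > 0
        have hδ0 : δ = 0 := by rw [h] at hδ; simpa using hδ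
        rw [hδ0, mul_zero] at h2
        exact lt_irrefl 0 h2
  · rintro ⟨t, ht0, ht1, hp⟩
    refine ⟨⟨t, hp⟩, ?_⟩
    rcases eq_or_lt_of_le ht0 with h | h
    · -- t = 0 : LsetII
      left; right
      exact ⟨1, one_pos, by rw [hp, ← h]; simp⟩
    · -- t > 0 : LsetI
      left; left
      refine ⟨t, 1, ?_, by positivity, ?_⟩
      · rw [lt_div_iff₀ hspos] at ht1; linarith
      · rw [hp, one_smul, add_comm]
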